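/- Let 0 < α < 1 and let (a_n)_{n≥1}, (b_n)_{n≥1} be sequences of nonnegative reals such that ∑_{n=1}^{∞} a_n² n^α < ∞ and ∑_{j=1}^{∞} j² 2^{(2-α)j} ∑_{n=2^j}^{2^{j+1}-1} b_n² < ∞. Then ∑_{n=2}^{∞} a_n b_n n ln n < ∞. -/

import Mathlib

open Real

private lemma amgm' (x y : ℝ) : x * y ≤ (x ^ 2 + y ^ 2) / 2 := by
  nlinarith [sq_nonneg (x - y)]

theorem cauchy_schwarz_dyadic_estimate (α : ℝ) (hα : 0 < α ∧ α < 1)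
    (a b : ℕ → ℝ) (ha : ∀ n, 0 ≤ a n) (hb : ∀ n, 0 ≤ b n)
    (hA : Summable (fun n : ℕ => (a n) ^ 2 * (n : ℝ) ^ α))
    (hB : Summable (fun j : ℕ =>
      (j : ℝ) ^ 2 * 2 ^ ((2 - α) * j) * ∑ n ∈ Finset.Ico (2 ^ j) (2 ^ (j + 1)), (b n) ^ 2)) :
    Summable (fun n : ℕ => a n * b n * n * Real.log n) := by
  obtain ⟨hα0, hα1⟩ := hα
  set f : ℕ → ℝ := fun n => b n ^ 2 * (n : ℝ) ^ (2 - α) * (Real.log n) ^ 2 with hf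
  set g : ℕ → ℝ := fun j => (j : ℝ) ^ 2 * 2 ^ ((2 - α) * j) *
    ∑ n ∈ Finset.Ico (2 ^ j) (2 ^ (j + 1)), (b n) ^ 2 with hg
  have hf0 : ∀ n, 0 ≤ f n := by
    intro n
    have : (0:ℝ) ≤ (n:ℝ) ^ (2 - α) := Real.rpow_nonneg (Nat.cast_nonneg n) _
    positivity
  have hg0 : ∀ j, 0 ≤ g j := by
    intro j
    have h1 : (0:ℝ) ≤ (2:ℝ) ^ ((2 - α) * j) := Real.rpow_nonneg (by norm_num) _
    have h2 : (0:ℝ) ≤ ∑ n ∈ Finset.Ico (2 ^ j) (2 ^ (j + 1)), (b n) ^ 2 :=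
      Finset.sum_nonneg fun n _ => sq_nonneg _
    positivity
  set C : ℝ := 16 * Real.log 2 ^ 2 with hC
  have hC0 : 0 ≤ C := by positivity
  -- block bound
  have hblock : ∀ j : ℕ, ∑ n ∈ Finset.Ico (2 ^ j) (2 ^ (j + 1)), f n ≤ C * g j := by
    intro j
    rcases Nat.eq_zero_or_pos j with rfl | hj
    · have : Finset.Ico (2 ^ 0) (2 ^ (0 + 1)) = {1} := rfl
      rw [this]
      simp [hf, hg, Real.log_one]
    · have h1 : (1:ℝ) ≤ (j:ℝ) := by exact_mod_cast hj
      set K : ℝ := Real.log 2 ^ 2 * ((j:ℝ) + 1) ^ 2 * (2:ℝ) ^ ((2 - α) * ((j:ℝ) + 1)) with hK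
      have hterm : ∀ n ∈ Finset.Ico (2 ^ j) (2 ^ (j + 1)), f n ≤ K * b n ^ 2 := by
        intro n hn
        rw [Finset.mem_Ico] at hn
        have hn1 : 1 ≤ n := le_trans (Nat.one_le_two_pow) hn.1
        have hnR : (1:ℝ) ≤ (n:ℝ) := by exact_mod_cast hn1
        have hle : (n:ℝ) ≤ (2:ℝ) ^ (j + 1) := by
          have := hn.2.le
          exact_mod_cast this
        have hpow : (n:ℝ) ^ (2 - α) ≤ (2:ℝ) ^ ((2 - α) * ((j:ℝ) + 1)) := by
          have h2 : (n:ℝ) ^ (2 - α) ≤ ((2:ℝ) ^ (j + 1)) ^ (2 - α) :=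
            Real.rpow_le_rpow (Nat.cast_nonneg n) hle (by linarith)
          have h3 : ((2:ℝ) ^ (j + 1)) ^ (2 - α) = (2:ℝ) ^ ((2 - α) * ((j:ℝ) + 1)) := by
            rw [← Real.rpow_natCast 2 (j + 1), ← Real.rpow_mul (by norm_num)]
            push_cast
            ring_nf
          linarith [h3 ▸ h2]
        have hlog : Real.log n ≤ ((j:ℝ) + 1) * Real.log 2 := by
          have := Real.log_le_log (by linarith : (0:ℝ) < (n:ℝ)) hle
          rwa [Real.log_pow, Nat.cast_add, Nat.cast_one] at this
        have hlog0 : 0 ≤ Real.log n := Real.log_nonneg hnR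
        have hlogsq : (Real.log n) ^ 2 ≤ (((j:ℝ) + 1) * Real.log 2) ^ 2 :=
          pow_le_pow_left₀ hlog0 hlog 2
        calc f n = b n ^ 2 * (n:ℝ) ^ (2 - α) * (Real.log n) ^ 2 := rfl
          _ ≤ b n ^ 2 * (2:ℝ) ^ ((2 - α) * ((j:ℝ) + 1)) * (((j:ℝ) + 1) * Real.log 2) ^ 2 := by
              have hb2 : (0:ℝ) ≤ b n ^ 2 := sq_nonneg _
              have h2p : (0:ℝ) ≤ (2:ℝ) ^ ((2 - α) * ((j:ℝ) + 1)) := Real.rpow_nonneg (by norm_num) _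
              have hnp : (0:ℝ) ≤ (n:ℝ) ^ (2 - α) := Real.rpow_nonneg (Nat.cast_nonneg n) _
              apply mul_le_mul _ hlogsq (sq_nonneg _) (by positivity)
              exact mul_le_mul_of_nonneg_left hpow hb2
          _ = K * b n ^ 2 := by rw [hK]; ring
      have hsum : ∑ n ∈ Finset.Ico (2 ^ j) (2 ^ (j + 1)), f n ≤
          K * ∑ n ∈ Finset.Ico (2 ^ j) (2 ^ (j + 1)), b n ^ 2 := by
        rw [Finset.mul_sum]
        exact Finset.sum_le_sum hterm
      have hKC : K ≤ C * ((j:ℝ) ^ 2 * (2:ℝ) ^ ((2 - α) * j)) := by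
        have hsplit : (2:ℝ) ^ ((2 - α) * ((j:ℝ) + 1)) =
            (2:ℝ) ^ ((2 - α) * (j:ℝ)) * (2:ℝ) ^ (2 - α) := by
          rw [← Real.rpow_add (by norm_num)]
          ring_nf
        have h2a : (2:ℝ) ^ (2 - α) ≤ 4 := by
          have : (2:ℝ) ^ (2 - α) ≤ (2:ℝ) ^ (2:ℝ) :=
            Real.rpow_le_rpow_of_exponent_le (by norm_num) (by linarith)
          have h4 : (2:ℝ) ^ (2:ℝ) = 4 := by
            rw [show (2:ℝ) = ((2:ℕ):ℝ) by norm_num, Real.rpow_natCast]; norm_num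
          linarith
        have hj2 : ((j:ℝ) + 1) ^ 2 ≤ 4 * (j:ℝ) ^ 2 := by nlinarith
        have h2p : (0:ℝ) ≤ (2:ℝ) ^ ((2 - α) * (j:ℝ)) := Real.rpow_nonneg (by norm_num) _
        have h2a0 : (0:ℝ) ≤ (2:ℝ) ^ (2 - α) := Real.rpow_nonneg (by norm_num) _
        have hl2 : (0:ℝ) ≤ Real.log 2 ^ 2 := sq_nonneg _
        rw [hK, hsplit, hC]
        nlinarith [mul_nonneg hl2 h2p, sq_nonneg ((j:ℝ) + 1), mul_le_mul hj2 h2a h2a0 (by positivity : (0:ℝ) ≤ 4 * (j:ℝ)^2), sq_nonneg (j:ℝ)]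
      have hbsum : (0:ℝ) ≤ ∑ n ∈ Finset.Ico (2 ^ j) (2 ^ (j + 1)), b n ^ 2 :=
        Finset.sum_nonneg fun n _ => sq_nonneg _
      calc ∑ n ∈ Finset.Ico (2 ^ j) (2 ^ (j + 1)), f n
          ≤ K * ∑ n ∈ Finset.Ico (2 ^ j) (2 ^ (j + 1)), b n ^ 2 := hsum
        _ ≤ C * ((j:ℝ) ^ 2 * (2:ℝ) ^ ((2 - α) * j)) *
            ∑ n ∈ Finset.Ico (2 ^ j) (2 ^ (j + 1)), b n ^ 2 :=
            mul_le_mul_of_nonneg_right hKC hbsum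
        _ = C * g j := by rw [hg]; ring
  -- summability of f
  have hSf : Summable f := by
    apply summable_of_sum_range_le hf0 (c := C * ∑' j, g j)
    intro N
    have hNsub : Finset.range N ⊆ Finset.range (2 ^ N) :=
      Finset.range_subset_range.2 (Nat.lt_two_pow_self (n := N)).le
    have h1 : ∑ i ∈ Finset.range N, f i ≤ ∑ i ∈ Finset.range (2 ^ N), f i :=
      Finset.sum_le_sum_of_subset_of_nonneg hNsub fun i _ _ => hf0 i
    have h2 : ∀ K : ℕ, ∑ i ∈ Finset.range (2 ^ K), f i ≤ C * ∑ j ∈ Finset.range K, g j := by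
      intro K
      induction K with
      | zero =>
        simp [hf, Real.log_zero]
      | succ K ih =>
        have hsplit : ∑ i ∈ Finset.range (2 ^ (K + 1)), f i =
            ∑ i ∈ Finset.range (2 ^ K), f i + ∑ i ∈ Finset.Ico (2 ^ K) (2 ^ (K + 1)), f i := by
          simp only [Finset.range_eq_Ico]
          exact (Finset.sum_Ico_consecutive f (Nat.zero_le _)
            (Nat.pow_le_pow_right (by norm_num) (Nat.le_succ K))).symm
        rw [hsplit, Finset.sum_range_succ, mul_add]
        exact add_le_add ih (hblock K)
    have h3 : ∑ j ∈ Finset.range N, g j ≤ ∑' j, g j :=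
      Summable.sum_le_tsum _ (fun j _ => hg0 j) hB
    calc ∑ i ∈ Finset.range N, f i ≤ ∑ i ∈ Finset.range (2 ^ N), f i := h1
      _ ≤ C * ∑ j ∈ Finset.range N, g j := h2 N
      _ ≤ C * ∑' j, g j := mul_le_mul_of_nonneg_left h3 hC0
  -- comparison
  have hmaj : Summable (fun n : ℕ => ((a n) ^ 2 * (n:ℝ) ^ α + f n) / 2) :=
    (hA.add hSf).div_const 2
  apply Summable.of_nonneg_of_le _ _ hmaj
  · intro n
    rcases Nat.eq_zero_or_pos n with rfl | hn
    · simp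
    · have hnR : (1:ℝ) ≤ (n:ℝ) := by exact_mod_cast hn
      have hlog0 : 0 ≤ Real.log n := Real.log_nonneg hnR
      have := mul_nonneg (mul_nonneg (mul_nonneg (ha n) (hb n)) (Nat.cast_nonneg n)) hlog0
      exact this
  · intro n
    rcases Nat.eq_zero_or_pos n with rfl | hn
    · have h1 : (0:ℝ) ≤ (a 0) ^ 2 * (0:ℝ) ^ α := by
        have : (0:ℝ) ≤ (0:ℝ) ^ α := Real.rpow_nonneg le_rfl _
        positivity
      simp only [Nat.cast_zero, mul_zero, zero_mul, Real.log_zero]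
      have := hf0 0
      linarith
    · have hnp : (0:ℝ) < (n:ℝ) := by exact_mod_cast hn
      set s : ℝ := (n:ℝ) ^ (α / 2) with hs
      set t : ℝ := (n:ℝ) ^ ((2 - α) / 2) with ht
      have hst : s * t = (n:ℝ) := by
        rw [hs, ht, ← Real.rpow_add hnp, show α / 2 + (2 - α) / 2 = 1 by ring, Real.rpow_one]
      have hs2 : s ^ 2 = (n:ℝ) ^ α := by
        rw [hs, sq, ← Real.rpow_add hnp]
        norm_num
      have ht2 : t ^ 2 = (n:ℝ) ^ (2 - α) := by
        rw [ht, sq, ← Real.rpow_add hnp]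
        norm_num
      have key : a n * b n * (n:ℝ) * Real.log n =
          (a n * s) * (b n * t * Real.log n) := by
        rw [← hst]; ring
      rw [key]
      calc (a n * s) * (b n * t * Real.log n)
          ≤ ((a n * s) ^ 2 + (b n * t * Real.log n) ^ 2) / 2 := amgm' _ _
        _ = ((a n) ^ 2 * (n:ℝ) ^ α + f n) / 2 := by
            rw [hf]
            simp only [mul_pow]
            rw [hs2, ht2]
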